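/- Let Γ be a countable group and let P ⊆ Sub(Γ) be a nonempty G_δ subset invariant under the conjugation action of Γ. Assume that (1) the set of Λ ∈ P of infinite index whose right coset action Λ\Γ ← Γ is highly transitive is dense in P, and (2) the conjugation action of Γ on P is topologically transitive. Then the conjugation action of Γ on P is highly topologically transitive. -/

import Mathlib

open Topology

/-- The Chabauty topology on the space of subgroups of `Γ`: the topology induced by the
injection `Sub(Γ) → {0,1}^Γ` (indicator functions), where `{0,1}^Γ` carries the product
of the discrete topologies. -/
instance chabauty (Γ : Type*) [Group Γ] : TopologicalSpace (Subgroup Γ) :=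
  TopologicalSpace.induced (fun (H : Subgroup Γ) (g : Γ) => g ∈ H)
    (@Pi.topologicalSpace Γ (fun _ => Prop) (fun _ => ⊥))

/-- The space of right cosets `Λ\Γ`. -/
def rQuot {Γ : Type*} [Group Γ] (Λ : Subgroup Γ) : Type _ :=
  Quotient (QuotientGroup.rightRel Λ)

/-- The right-translation action of `Γ` on the right coset space `Λ\Γ`:
`Λx · γ = Λxγ`. -/
def rAct {Γ : Type*} [Group Γ] (Λ : Subgroup Γ) (γ : Γ) : rQuot Λ → rQuot Λ :=
  Quotient.map' (fun x => x * γ) (by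
    intro x y h
    rw [QuotientGroup.rightRel_apply] at h ⊢
    have key : y * γ * (x * γ)⁻¹ = y * x⁻¹ := by group
    rw [key]; exact h)

/-- The right-translation action of `Γ` on `Λ\Γ` is highly transitive: for every `d ≥ 1`,
any `d`-tuple of pairwise distinct cosets can be mapped to any other by some `γ ∈ Γ`. -/
def HTcoset {Γ : Type*} [Group Γ] (Λ : Subgroup Γ) : Prop :=
  ∀ d : ℕ, 1 ≤ d → ∀ x y : Fin d → rQuot Λ,
    Function.Injective x → Function.Injective y →
    ∃ γ : Γ, ∀ i, rAct Λ γ (x i) = y i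

/-- `HT(Γ)`: the set of infinite index subgroups `Λ ≤ Γ` whose right-translation action
on `Λ\Γ` is highly transitive. -/
def HTset (Γ : Type*) [Group Γ] : Set (Subgroup Γ) :=
  {Λ | Infinite (rQuot Λ) ∧ HTcoset Λ}

/-- The conjugation (right) action of `Γ` on its subgroups: `Λ · γ = γ⁻¹ Λ γ`. -/
def conjR {Γ : Type*} [Group Γ] (Λ : Subgroup Γ) (γ : Γ) : Subgroup Γ :=
  Λ.comap (MulAut.conj γ).toMonoidHom

section Aux

variable {Γ : Type*} [Group Γ]

lemma mem_conjR {Λ : Subgroup Γ} {γ g : Γ} : g ∈ conjR Λ γ ↔ γ * g * γ⁻¹ ∈ Λ := by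
  simp [conjR, MulAut.conj]

lemma conjR_mul (Λ : Subgroup Γ) (a b : Γ) : conjR (conjR Λ a) b = conjR Λ (a * b) := by
  ext g; simp [mem_conjR, mul_assoc]

/-- The product of `⊥` (discrete) topologies on `Γ → Prop`. -/
abbrev piBot (Γ : Type*) : TopologicalSpace (Γ → Prop) :=
  @Pi.topologicalSpace Γ (fun _ => Prop) (fun _ => ⊥)

lemma chabauty_isOpen_iff {s : Set (Subgroup Γ)} :
    IsOpen s ↔ ∃ t : Set (Γ → Prop), IsOpen[piBot Γ] t ∧
      (fun (H : Subgroup Γ) (g : Γ) => g ∈ H) ⁻¹' t = s :=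
  @isOpen_induced_iff _ _ (piBot Γ) s _

/-- Conjugation by a fixed element is continuous for the Chabauty topology. -/
lemma conjR_continuous (γ : Γ) : Continuous (fun Λ : Subgroup Γ => conjR Λ γ) := by
  letI : TopologicalSpace Prop := ⊥
  haveI : DiscreteTopology Prop := ⟨rfl⟩
  rw [continuous_def]
  intro s hs
  rw [chabauty_isOpen_iff] at hs ⊢
  obtain ⟨t, ht, rfl⟩ := hs
  refine ⟨(fun f : Γ → Prop => fun g => f (γ * g * γ⁻¹)) ⁻¹' t, ?_, ?_⟩
  · exact (continuous_pi fun g =>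
      continuous_apply (A := fun _ : Γ => Prop) (γ * g * γ⁻¹)).isOpen_preimage t ht
  · ext Λ
    simp only [Set.mem_preimage]
    have h : (fun g => (g ∈ conjR Λ γ)) = fun g => (γ * g * γ⁻¹ ∈ Λ) :=
      funext fun g => propext mem_conjR
    show (fun g => γ * g * γ⁻¹ ∈ Λ) ∈ t ↔ (fun g => g ∈ conjR Λ γ) ∈ t
    rw [h]

/-- Basic clopen sets of the Chabauty topology. -/
lemma isOpen_iffSet (g : Γ) (p : Prop) : IsOpen {H : Subgroup Γ | (g ∈ H) ↔ p} := by
  letI : TopologicalSpace Prop := ⊥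
  haveI : DiscreteTopology Prop := ⟨rfl⟩
  rw [chabauty_isOpen_iff]
  refine ⟨{f : Γ → Prop | f g ↔ p}, ?_, rfl⟩
  exact (continuous_apply (A := fun _ : Γ => Prop) g).isOpen_preimage {q | q ↔ p}
    (isOpen_discrete _)

/-- If `a, b` lie in the same right coset of `Λ`, conjugating `Λ` by them agrees. -/
lemma conjR_eq_of_coset {Λ : Subgroup Γ} {a b : Γ} (h : b * a⁻¹ ∈ Λ) :
    conjR Λ a = conjR Λ b := by
  ext g
  simp only [mem_conjR]
  constructor
  · intro hg
    have hm := Λ.mul_mem (Λ.mul_mem h hg) (Λ.inv_mem h)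
    have e : b * a⁻¹ * (a * g * a⁻¹) * (b * a⁻¹)⁻¹ = b * g * b⁻¹ := by group
    rwa [e] at hm
  · intro hg
    have h' : a * b⁻¹ ∈ Λ := by
      have := Λ.inv_mem h; rwa [mul_inv_rev, inv_inv] at this
    have hm := Λ.mul_mem (Λ.mul_mem h' hg) (Λ.inv_mem h')
    have e : a * b⁻¹ * (b * g * b⁻¹) * (a * b⁻¹)⁻¹ = a * g * a⁻¹ := by group
    rwa [e] at hm

lemma conjR_eq_of_mk_eq {Λ : Subgroup Γ} {a b : Γ}
    (h : (Quotient.mk'' a : rQuot Λ) = Quotient.mk'' b) : conjR Λ a = conjR Λ b := by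
  have hr := Quotient.eq''.mp h
  rw [QuotientGroup.rightRel_apply] at hr
  exact conjR_eq_of_coset hr

/-- Key lemma: if the coset action of `Λ` is highly transitive, two families of
conjugates of `Λ` along pairwise distinct cosets can be matched exactly by a single
conjugation. -/
lemma exists_conj_of_HT {Λ : Subgroup Γ} (hHT : HTcoset Λ) {d : ℕ} (hd : 1 ≤ d)
    (a b : Fin d → Γ)
    (ha : Function.Injective fun i => (Quotient.mk'' (a i) : rQuot Λ))
    (hb : Function.Injective fun i => (Quotient.mk'' (b i) : rQuot Λ)) :
    ∃ γ : Γ, ∀ i, conjR Λ (a i * γ) = conjR Λ (b i) := by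
  obtain ⟨γ, hγ⟩ := hHT d hd (fun i => Quotient.mk'' (a i)) (fun i => Quotient.mk'' (b i)) ha hb
  refine ⟨γ, fun i => ?_⟩
  have h := hγ i
  rw [show rAct Λ γ (Quotient.mk'' (a i)) = Quotient.mk'' (a i * γ) from rfl] at h
  exact conjR_eq_of_mk_eq h

/-- Around an injective tuple, an open set of tuples contains a "box" with pairwise
disjoint open factors. -/
lemma exists_disjoint_box {d : ℕ} {U : Set (Fin d → Subgroup Γ)}
    (hU : IsOpen U) {x : Fin d → Subgroup Γ} (hx : x ∈ U) (hinj : Function.Injective x) :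
    ∃ u : Fin d → Set (Subgroup Γ), (∀ i, IsOpen (u i)) ∧ (∀ i, x i ∈ u i) ∧
      (∀ i j, i ≠ j → ∀ H, H ∈ u i → H ∈ u j → False) ∧
      {f : Fin d → Subgroup Γ | ∀ i, f i ∈ u i} ⊆ U := by
  obtain ⟨I, u₀, hu₀, hsub⟩ := isOpen_pi_iff.mp hU x hx
  have sep : ∀ i j : Fin d, i ≠ j → ∃ g : Γ, ¬ ((g ∈ x i) ↔ (g ∈ x j)) := by
    intro i j hij
    by_contra hcon
    push_neg at hcon
    exact hinj.ne hij (Subgroup.ext fun g => hcon g)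
  classical
  set G : Fin d → Fin d → Γ := fun i j => if h : i ≠ j then (sep i j h).choose else 1 with hG
  have hGprop : ∀ i j (h : i ≠ j), ¬ ((G i j ∈ x i) ↔ (G i j ∈ x j)) := by
    intro i j h
    simp only [hG, dif_pos h]
    exact (sep i j h).choose_spec
  set T : Fin d → Fin d → Set (Subgroup Γ) := fun i j =>
    if i = j then Set.univ else
      ({H | (G i j ∈ H) ↔ (G i j ∈ x i)} ∩ {H | (G j i ∈ H) ↔ (G j i ∈ x i)}) with hT
  have hTopen : ∀ i j, IsOpen (T i j) := by
    intro i j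
    simp only [hT]
    split
    · exact isOpen_univ
    · exact (isOpen_iffSet _ _).inter (isOpen_iffSet _ _)
  have hTmem : ∀ i j, x i ∈ T i j := by
    intro i j
    simp only [hT]
    split
    · trivial
    · exact ⟨Iff.rfl, Iff.rfl⟩
  refine ⟨fun i => (if i ∈ I then u₀ i else Set.univ) ∩ ⋂ j, T i j, ?_, ?_, ?_, ?_⟩
  · intro i
    refine IsOpen.inter ?_ (isOpen_iInter_of_finite (hTopen i))
    split
    · exact (hu₀ i (by assumption)).1
    · exact isOpen_univ
  · intro i
    refine ⟨?_, Set.mem_iInter.mpr fun j => hTmem i j⟩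
    split
    · exact (hu₀ i (by assumption)).2
    · trivial
  · intro i j hij H hHi hHj
    have h1 : H ∈ T i j := Set.mem_iInter.mp hHi.2 j
    have h2 : H ∈ T j i := Set.mem_iInter.mp hHj.2 i
    simp only [hT, if_neg hij, if_neg (Ne.symm hij)] at h1 h2
    exact hGprop i j hij (h1.1.symm.trans h2.2)
  · intro f hf
    refine hsub fun i hiI => ?_
    have := (hf i).1
    rwa [if_pos (Finset.mem_coe.mp hiI)] at this

/-- Iterating topological transitivity: there is a nonempty (rel. `P`) open set `W` and
elements `c k` such that every `Λ ∈ W ∩ P` has its conjugate by `c k` inside `O k ∩ P`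
for all `k < m`. -/
lemma chain_lemma {P : Set (Subgroup Γ)} (hne : P.Nonempty)
    (hinv : ∀ (Λ : Subgroup Γ) (γ : Γ), Λ ∈ P → conjR Λ γ ∈ P)
    (htt : ∀ U V : Set (Subgroup Γ), IsOpen U → IsOpen V →
      (U ∩ P).Nonempty → (V ∩ P).Nonempty →
      ∃ γ : Γ, ∃ Λ ∈ U ∩ P, conjR Λ γ ∈ V ∩ P)
    (m : ℕ) :
    ∀ O : ℕ → Set (Subgroup Γ), (∀ k, k < m → IsOpen (O k)) →
      (∀ k, k < m → (O k ∩ P).Nonempty) →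
      ∃ (c : ℕ → Γ) (W : Set (Subgroup Γ)), IsOpen W ∧ (W ∩ P).Nonempty ∧
        ∀ Λ ∈ W ∩ P, ∀ k, k < m → conjR Λ (c k) ∈ O k ∩ P := by
  induction m with
  | zero =>
    exact fun O _ _ => ⟨fun _ => 1, Set.univ, isOpen_univ, by simpa using hne,
      fun Λ _ k hk => absurd hk (Nat.not_lt_zero k)⟩
  | succ n ih =>
    intro O hO hOP
    obtain ⟨c, W, hWopen, hWP, hc⟩ := ih O (fun k hk => hO k (hk.trans n.lt_succ_self))
      (fun k hk => hOP k (hk.trans n.lt_succ_self))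
    obtain ⟨γ, Λ, hΛ, hΛγ⟩ := htt W (O n) hWopen (hO n n.lt_succ_self) hWP
      (hOP n n.lt_succ_self)
    classical
    refine ⟨fun k => if k = n then γ else c k,
      W ∩ (fun H => conjR H γ) ⁻¹' (O n),
      hWopen.inter ((conjR_continuous γ).isOpen_preimage _ (hO n n.lt_succ_self)),
      ⟨Λ, ⟨hΛ.1, hΛγ.1⟩, hΛ.2⟩, ?_⟩
    intro Λ' hΛ' k hk
    show conjR Λ' (if k = n then γ else c k) ∈ O k ∩ P
    rcases Nat.lt_succ_iff_lt_or_eq.mp hk with h | rfl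
    · rw [if_neg h.ne]
      exact hc Λ' ⟨hΛ'.1.1, hΛ'.2⟩ k h
    · rw [if_pos rfl]
      exact ⟨hΛ'.1.2, hinv Λ' γ hΛ'.2⟩

end Aux

/-- HT + TT ⟹ HTT: if `P ⊆ Sub(Γ)` is a nonempty `Γ`-invariant `Gδ` set in which the
highly transitive subgroups are dense, and if the conjugation action of `Γ` on `P` is
topologically transitive, then the conjugation action of `Γ` on `P` is highly
topologically transitive (the conclusion unfolds topological transitivity of the
diagonal action on the subspace of `d`-tuples of pairwise distinct points of `P`). -/
theorem ht_and_tt_implies_htt (Γ : Type*) [Group Γ] [Countable Γ]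
    (P : Set (Subgroup Γ)) (hne : P.Nonempty) (hGδ : IsGδ P)
    (hinv : ∀ (Λ : Subgroup Γ) (γ : Γ), Λ ∈ P → conjR Λ γ ∈ P)
    (hdense : P ⊆ closure (HTset Γ ∩ P))
    (htt : ∀ U V : Set (Subgroup Γ), IsOpen U → IsOpen V →
      (U ∩ P).Nonempty → (V ∩ P).Nonempty →
      ∃ γ : Γ, ∃ Λ ∈ U ∩ P, conjR Λ γ ∈ V ∩ P) :
    ∀ d : ℕ, 1 ≤ d → ∀ U V : Set (Fin d → Subgroup Γ), IsOpen U → IsOpen V →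
      (∃ x ∈ U, Function.Injective x ∧ ∀ i, x i ∈ P) →
      (∃ y ∈ V, Function.Injective y ∧ ∀ i, y i ∈ P) →
      ∃ γ : Γ, ∃ x ∈ U, Function.Injective x ∧ (∀ i, x i ∈ P) ∧
        (fun i => conjR (x i) γ) ∈ V ∧
        Function.Injective (fun i => conjR (x i) γ) ∧ (∀ i, conjR (x i) γ ∈ P) := by
  intro d hd U V hUopen hVopen hxU hyV
  obtain ⟨x₀, hx₀U, hx₀inj, hx₀P⟩ := hxU
  obtain ⟨y₀, hy₀V, hy₀inj, hy₀P⟩ := hyV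
  obtain ⟨u, huopen, hxu, hudisj, husub⟩ := exists_disjoint_box hUopen hx₀U hx₀inj
  obtain ⟨v, hvopen, hyv, hvdisj, hvsub⟩ := exists_disjoint_box hVopen hy₀V hy₀inj
  classical
  set O : ℕ → Set (Subgroup Γ) := fun k =>
    if h : k < d then u ⟨k, h⟩ else if h' : k - d < d then v ⟨k - d, h'⟩ else Set.univ
    with hOdef
  have hOu : ∀ i : Fin d, O i.val = u i := by
    intro i; simp only [hOdef, dif_pos i.isLt]
  have hOv : ∀ i : Fin d, O (d + i.val) = v i := by
    intro i
    have h1 : ¬ (d + i.val < d) := by omega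
    have h2 : d + i.val - d = i.val := by omega
    simp only [hOdef, dif_neg h1, h2, dif_pos i.isLt]
  have hOopen : ∀ k, k < d + d → IsOpen (O k) := by
    intro k _
    simp only [hOdef]
    split
    · exact huopen _
    · split
      · exact hvopen _
      · exact isOpen_univ
  have hOP : ∀ k, k < d + d → (O k ∩ P).Nonempty := by
    intro k hk
    by_cases h : k < d
    · refine ⟨x₀ ⟨k, h⟩, ?_, hx₀P _⟩
      simp only [hOdef, dif_pos h]
      exact hxu _
    · have h' : k - d < d := by omega
      refine ⟨y₀ ⟨k - d, h'⟩, ?_, hy₀P _⟩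
      simp only [hOdef, dif_neg h, dif_pos h']
      exact hyv _
  obtain ⟨c, W, hWopen, hWP, hc⟩ := chain_lemma hne hinv htt (d + d) O hOopen hOP
  obtain ⟨p, hpW, hpP⟩ := hWP
  obtain ⟨Λ, hΛW, hΛmem⟩ := mem_closure_iff.mp (hdense hpP) W hWopen hpW
  set a : Fin d → Γ := fun i => c i.val with ha
  set b : Fin d → Γ := fun i => c (d + i.val) with hb
  have hca : ∀ i, conjR Λ (a i) ∈ u i ∩ P := by
    intro i
    have := hc Λ ⟨hΛW, hΛmem.2⟩ i.val (by omega)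
    rwa [hOu i] at this
  have hcb : ∀ i, conjR Λ (b i) ∈ v i ∩ P := by
    intro i
    have := hc Λ ⟨hΛW, hΛmem.2⟩ (d + i.val) (by omega)
    rwa [hOv i] at this
  have hainj : Function.Injective fun i => (Quotient.mk'' (a i) : rQuot Λ) := by
    intro i j h
    by_contra hne'
    have hmem := (hca j).1
    rw [← conjR_eq_of_mk_eq h] at hmem
    exact hudisj i j hne' _ (hca i).1 hmem
  have hbinj : Function.Injective fun i => (Quotient.mk'' (b i) : rQuot Λ) := by
    intro i j h
    by_contra hne'
    have hmem := (hcb j).1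
    rw [← conjR_eq_of_mk_eq h] at hmem
    exact hvdisj i j hne' _ (hcb i).1 hmem
  obtain ⟨γ, hγ⟩ := exists_conj_of_HT hΛmem.1.2 hd a b hainj hbinj
  have key : ∀ i, conjR (conjR Λ (a i)) γ = conjR Λ (b i) := by
    intro i; rw [conjR_mul]; exact hγ i
  refine ⟨γ, fun i => conjR Λ (a i), husub (fun i => (hca i).1), ?_,
    fun i => (hca i).2, ?_, ?_, fun i => hinv _ γ (hca i).2⟩
  · intro i j h
    by_contra hne'
    have h' : conjR Λ (a i) = conjR Λ (a j) := h
    have hmem := (hca j).1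
    rw [← h'] at hmem
    exact hudisj i j hne' _ (hca i).1 hmem
  · refine hvsub ?_
    intro i
    show conjR (conjR Λ (a i)) γ ∈ v i
    rw [key i]
    exact (hcb i).1
  · intro i j h
    by_contra hne'
    have h' : conjR Λ (b i) = conjR Λ (b j) := by
      rw [← key i, ← key j]; exact h
    have hmem := (hcb j).1
    rw [← h'] at hmem
    exact hvdisj i j hne' _ (hcb i).1 hmem
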